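/- Let N ≥ 2, 1 < p < N and α > N. Define W : {y ∈ ℝ^N : |y| ≥ 1} → ℝ by W(y) = (α−N)^{−1/(p−1)} ∫_{|y|}^{∞} (t^{α−N} − 1)^{1/(p−1)} t^{−(α−1)/(p−1)} dt. Then the integral converges for every such y, W is positive on {|y| ≥ 1}, W is strictly decreasing as a function of |y|, and W is a classical solution of −Δ_p W = |y|^{−α} in the open set {y : |y| > 1}: the vector field |∇W|^{p−2}∇W is of class C¹ there and −div(|∇W|^{p−2}∇W)(y) = |y|^{−α} for all |y| > 1. -/

import Mathlib

open MeasureTheory Real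
open scoped RealInnerProductSpace

noncomputable section


lemma aux_hasFDerivAt_norm {E : Type*} [NormedAddCommGroup E] [InnerProductSpace ℝ E]
    {y : E} (hy : y ≠ 0) :
    HasFDerivAt (fun z : E => ‖z‖) (‖y‖⁻¹ • (innerSL ℝ y : E →L[ℝ] ℝ)) y := by
  have hinner := (hasFDerivAt_id y).inner ℝ (hasFDerivAt_id (𝕜 := ℝ) y)
  have h0 : 0 < ‖y‖ := norm_pos_iff.2 hy
  have hne : ⟪y, y⟫ ≠ 0 := by
    rw [real_inner_self_eq_norm_mul_norm]
    positivity
  have h2 := hinner.sqrt hne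
  simp only [id_eq] at h2
  have hfun : (fun z : E => √⟪z, z⟫) = fun z : E => ‖z‖ := by
    funext z
    rw [real_inner_self_eq_norm_mul_norm, Real.sqrt_mul_self (norm_nonneg z)]
  rw [hfun] at h2
  refine h2.congr_fderiv ?_
  ext v
  have hsq : √⟪y, y⟫ = ‖y‖ := by
    rw [real_inner_self_eq_norm_mul_norm, Real.sqrt_mul_self (norm_nonneg y)]
  simp only [ContinuousLinearMap.smul_apply, ContinuousLinearMap.comp_apply,
    ContinuousLinearMap.prod_apply, fderivInnerCLM_apply, ContinuousLinearMap.coe_id', id_eq,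
    innerSL_apply_apply, hsq]
  rw [real_inner_comm v y]
  have : ‖y‖ ≠ 0 := ne_of_gt h0
  field_simp
  ring

variable {p α n : ℝ}

lemma aux_g_cont (hp1 : 1 < p) :
    ContinuousOn (fun t : ℝ => (t ^ (α - n) - 1) ^ (1 / (p - 1)) * t ^ (-(α - 1) / (p - 1)))
      (Set.Ioi 0) := by
  intro t ht
  have ht0 : t ≠ 0 := ne_of_gt ht
  refine ContinuousAt.continuousWithinAt ?_
  have c1 : ContinuousAt (fun t : ℝ => t ^ (α - n) - 1) t :=
    (Real.continuousAt_rpow_const t _ (Or.inl ht0)).sub continuousAt_const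
  have c2 : ContinuousAt (fun t : ℝ => (t ^ (α - n) - 1) ^ (1 / (p - 1))) t :=
    c1.rpow_const (Or.inr (le_of_lt (div_pos one_pos (by linarith))))
  exact c2.mul (Real.continuousAt_rpow_const t _ (Or.inl ht0))

lemma aux_g_nonneg (hp1 : 1 < p) (hnα : n < α) {t : ℝ} (ht : 1 ≤ t) :
    0 ≤ (t ^ (α - n) - 1) ^ (1 / (p - 1)) * t ^ (-(α - 1) / (p - 1)) := by
  have h1 : (1:ℝ) ≤ t ^ (α - n) := by
    calc (1:ℝ) = 1 ^ (α - n) := (Real.one_rpow _).symm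
    _ ≤ t ^ (α - n) := Real.rpow_le_rpow zero_le_one ht (by linarith)
  have := Real.rpow_nonneg (by linarith : (0:ℝ) ≤ t ^ (α - n) - 1) (1 / (p - 1))
  have := Real.rpow_nonneg (by linarith : (0:ℝ) ≤ t) (-(α - 1) / (p - 1))
  positivity

lemma aux_g_pos (hp1 : 1 < p) (hnα : n < α) {t : ℝ} (ht : 1 < t) :
    0 < (t ^ (α - n) - 1) ^ (1 / (p - 1)) * t ^ (-(α - 1) / (p - 1)) := by
  have h1 : (1:ℝ) < t ^ (α - n) :=
    (Real.one_lt_rpow_iff_of_pos (by linarith)).mpr (Or.inl ⟨ht, by linarith⟩)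
  have h2 : (0:ℝ) < (t ^ (α - n) - 1) ^ (1 / (p - 1)) :=
    Real.rpow_pos_of_pos (by linarith) _
  have h3 : (0:ℝ) < t ^ (-(α - 1) / (p - 1)) := Real.rpow_pos_of_pos (by linarith) _
  positivity

lemma aux_g_int (hp1 : 1 < p) (hpn : p < n) (hnα : n < α) {r : ℝ} (hr : 1 ≤ r) :
    IntegrableOn (fun t : ℝ => (t ^ (α - n) - 1) ^ (1 / (p - 1)) * t ^ (-(α - 1) / (p - 1)))
      (Set.Ioi r) := by
  have hp0 : (0:ℝ) < p - 1 := by linarith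
  have hmeas : MeasurableSet (Set.Ioi r) := measurableSet_Ioi
  have hasm : AEStronglyMeasurable
      (fun t : ℝ => (t ^ (α - n) - 1) ^ (1 / (p - 1)) * t ^ (-(α - 1) / (p - 1)))
      (volume.restrict (Set.Ioi r)) := ((aux_g_cont (α := α) (n := n) hp1).mono
    (fun t (ht : t ∈ Set.Ioi r) => show (0:ℝ) < t by
      simp only [Set.mem_Ioi] at ht ⊢; linarith)).aestronglyMeasurable hmeas
  have hlt : (1 - n) / (p - 1) < -1 := by
    rw [div_lt_iff₀ hp0]; linarith
  have hbound : IntegrableOn (fun t : ℝ => t ^ ((1 - n) / (p - 1))) (Set.Ioi r) :=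
    integrableOn_Ioi_rpow_of_lt hlt (by linarith)
  refine MeasureTheory.Integrable.mono hbound hasm ?_
  filter_upwards [ae_restrict_mem hmeas] with t ht
  simp only [Set.mem_Ioi] at ht
  have h1t : (1:ℝ) ≤ t := by linarith
  have h0t : (0:ℝ) < t := by linarith
  rw [Real.norm_eq_abs, Real.norm_eq_abs, abs_of_nonneg (aux_g_nonneg hp1 hnα h1t),
    abs_of_nonneg (Real.rpow_nonneg h0t.le _)]
  have hA : (0:ℝ) ≤ t ^ (α - n) - 1 := by
    have : (1:ℝ) ≤ t ^ (α - n) := by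
      calc (1:ℝ) = 1 ^ (α - n) := (Real.one_rpow _).symm
      _ ≤ t ^ (α - n) := Real.rpow_le_rpow zero_le_one h1t (by linarith)
    linarith
  calc (t ^ (α - n) - 1) ^ (1 / (p - 1)) * t ^ (-(α - 1) / (p - 1))
      ≤ (t ^ (α - n)) ^ (1 / (p - 1)) * t ^ (-(α - 1) / (p - 1)) := by
        refine mul_le_mul_of_nonneg_right
          (Real.rpow_le_rpow hA (by linarith) (by positivity)) (Real.rpow_nonneg h0t.le _)
    _ = t ^ ((1 - n) / (p - 1)) := by
        rw [← Real.rpow_mul h0t.le, ← Real.rpow_add h0t]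
        congr 1
        field_simp
        ring

lemma aux_int_pos_Ioi (hp1 : 1 < p) (hpn : p < n) (hnα : n < α) {r : ℝ} (hr : 1 ≤ r) :
    0 < ∫ t in Set.Ioi r, (t ^ (α - n) - 1) ^ (1 / (p - 1)) * t ^ (-(α - 1) / (p - 1)) := by
  rw [setIntegral_pos_iff_support_of_nonneg_ae ?_ (aux_g_int hp1 hpn hnα hr)]
  · refine lt_of_lt_of_le ?_ (measure_mono (fun t (ht : t ∈ Set.Ioi r) =>
      ⟨ne_of_gt (aux_g_pos hp1 hnα (lt_of_le_of_lt hr ht)), ht⟩))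
    simp [Real.volume_Ioi]
  · filter_upwards [ae_restrict_mem measurableSet_Ioi] with t ht
    exact aux_g_nonneg hp1 hnα (hr.trans (le_of_lt ht))

lemma aux_int_pos_Ioc (hp1 : 1 < p) (hpn : p < n) (hnα : n < α) {r1 r2 : ℝ}
    (hr1 : 1 ≤ r1) (h12 : r1 < r2) :
    0 < ∫ t in Set.Ioc r1 r2, (t ^ (α - n) - 1) ^ (1 / (p - 1)) * t ^ (-(α - 1) / (p - 1)) := by
  rw [setIntegral_pos_iff_support_of_nonneg_ae ?_
    ((aux_g_int hp1 hpn hnα hr1).mono_set Set.Ioc_subset_Ioi_self)]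
  · refine lt_of_lt_of_le ?_ (measure_mono (fun t (ht : t ∈ Set.Ioc r1 r2) =>
      ⟨ne_of_gt (aux_g_pos hp1 hnα (lt_of_le_of_lt hr1 ht.1)), ht⟩))
    simp only [Real.volume_Ioc]
    exact ENNReal.ofReal_pos.mpr (by linarith)
  · filter_upwards [ae_restrict_mem measurableSet_Ioc] with t ht
    exact aux_g_nonneg hp1 hnα (hr1.trans (le_of_lt ht.1))

lemma aux_int_split (hp1 : 1 < p) (hpn : p < n) (hnα : n < α) {r1 r2 : ℝ}
    (hr1 : 1 ≤ r1) (h12 : r1 ≤ r2) :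
    ∫ t in Set.Ioi r1, (t ^ (α - n) - 1) ^ (1 / (p - 1)) * t ^ (-(α - 1) / (p - 1))
      = (∫ t in Set.Ioc r1 r2, (t ^ (α - n) - 1) ^ (1 / (p - 1)) * t ^ (-(α - 1) / (p - 1)))
        + ∫ t in Set.Ioi r2, (t ^ (α - n) - 1) ^ (1 / (p - 1)) * t ^ (-(α - 1) / (p - 1)) := by
  rw [← setIntegral_union (Set.Ioc_disjoint_Ioi le_rfl) measurableSet_Ioi
    ((aux_g_int hp1 hpn hnα hr1).mono_set Set.Ioc_subset_Ioi_self)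
    (aux_g_int hp1 hpn hnα (hr1.trans h12)), Set.Ioc_union_Ioi_eq_Ioi h12]

lemma aux_hasDeriv_F (hp1 : 1 < p) (hpn : p < n) (hnα : n < α) {r : ℝ} (hr : 1 < r) :
    HasDerivAt (fun s : ℝ =>
      ∫ t in Set.Ioi s, (t ^ (α - n) - 1) ^ (1 / (p - 1)) * t ^ (-(α - 1) / (p - 1)))
      (-((r ^ (α - n) - 1) ^ (1 / (p - 1)) * r ^ (-(α - 1) / (p - 1)))) r := by
  set g : ℝ → ℝ := fun t => (t ^ (α - n) - 1) ^ (1 / (p - 1)) * t ^ (-(α - 1) / (p - 1)) with hg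
  set a : ℝ := (1 + r) / 2 with ha
  have ha1 : 1 < a := by rw [ha]; linarith
  have har : a < r := by rw [ha]; linarith
  have hcont := aux_g_cont (p := p) (α := α) (n := n) hp1
  have hcont_at : ContinuousAt g r := hcont.continuousAt (Ioi_mem_nhds (by linarith))
  have hint_ab : HasDerivAt (fun u => ∫ t in a..u, g t) (g r) r := by
    refine intervalIntegral.integral_hasDerivAt_right
      (ContinuousOn.intervalIntegrable (hcont.mono ?_)) ?_ hcont_at
    · intro x hx
      rw [Set.uIcc_of_le har.le] at hx
      exact lt_of_lt_of_le (by linarith) hx.1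
    · exact hcont.stronglyMeasurableAtFilter isOpen_Ioi r (by simp; linarith)
  have hD : HasDerivAt (fun u => (∫ t in Set.Ioi a, g t) - ∫ t in a..u, g t) (-(g r)) r :=
    hint_ab.const_sub _
  refine hD.congr_of_eventuallyEq ?_
  filter_upwards [Ioi_mem_nhds har] with s hs
  rw [intervalIntegral.integral_of_le (le_of_lt hs),
    aux_int_split hp1 hpn hnα ha1.le (le_of_lt hs)]
  ring


/-- The divergence of a vector field `V : ℝ^N → ℝ^N`, as the trace of its Fréchet derivative
computed in the standard orthonormal basis. -/
def vecDiv {N : ℕ} (V : EuclideanSpace ℝ (Fin N) → EuclideanSpace ℝ (Fin N))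
    (x : EuclideanSpace ℝ (Fin N)) : ℝ :=
  ∑ i : Fin N, ⟪fderiv ℝ V x (EuclideanSpace.single i 1), EuclideanSpace.single i 1⟫


/-- The radial function `W(y) = (α−N)^{−1/(p−1)} ∫_{|y|}^∞ (t^{α−N} − 1)^{1/(p−1)}
t^{−(α−1)/(p−1)} dt` is well defined, positive, strictly decreasing in `|y|`, and is a
classical solution of `−Δ_p W = |y|^{−α}` for `|y| > 1`. -/
theorem radial_supersolution (N : ℕ) (hN : 2 ≤ N) (p α : ℝ)
    (hp1 : 1 < p) (hpN : p < N) (hα : (N : ℝ) < α) :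
    let g : ℝ → ℝ := fun t => (t ^ (α - N) - 1) ^ (1 / (p - 1)) * t ^ (-(α - 1) / (p - 1))
    let W : EuclideanSpace ℝ (Fin N) → ℝ :=
      fun y => (α - N) ^ (-(1 : ℝ) / (p - 1)) * ∫ t in Set.Ioi ‖y‖, g t
    (∀ y : EuclideanSpace ℝ (Fin N), 1 ≤ ‖y‖ →
      MeasureTheory.IntegrableOn g (Set.Ioi ‖y‖)) ∧
    (∀ y : EuclideanSpace ℝ (Fin N), 1 ≤ ‖y‖ → 0 < W y) ∧
    (∀ y1 y2 : EuclideanSpace ℝ (Fin N), 1 ≤ ‖y1‖ → ‖y1‖ < ‖y2‖ → W y2 < W y1) ∧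
    ContDiffOn ℝ 1 (fun y => (‖gradient W y‖ ^ (p - 2)) • gradient W y)
      {y : EuclideanSpace ℝ (Fin N) | 1 < ‖y‖} ∧
    ∀ y : EuclideanSpace ℝ (Fin N), 1 < ‖y‖ →
      -vecDiv (fun z => (‖gradient W z‖ ^ (p - 2)) • gradient W z) y = ‖y‖ ^ (-α) := by
  intro g W
  have hNα : (0:ℝ) < α - N := by linarith
  have hp0 : (0:ℝ) < p - 1 := by linarith
  set c : ℝ := (α - N) ^ (-(1 : ℝ) / (p - 1)) with hc_def
  have hc : 0 < c := Real.rpow_pos_of_pos hNα _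
  -- gradient formula
  have hgrad : ∀ y : EuclideanSpace ℝ (Fin N), 1 < ‖y‖ →
      HasGradientAt W ((-(c * g ‖y‖ / ‖y‖)) • y) y := by
    intro y hy
    have hy0 : y ≠ 0 := by
      intro h; rw [h, norm_zero] at hy; linarith
    have h1 := (aux_hasDeriv_F hp1 hpN hα hy).comp_hasFDerivAt y (aux_hasFDerivAt_norm hy0)
    have h2 := h1.const_mul c
    rw [hasGradientAt_iff_hasFDerivAt]
    refine h2.congr_fderiv ?_
    ext v
    simp only [ContinuousLinearMap.smul_apply, innerSL_apply_apply, InnerProductSpace.toDual_apply_apply,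
      real_inner_smul_left, smul_eq_mul]
    simp only [g]
    rw [div_eq_mul_inv]
    ring
  have hgrad_eq : ∀ y : EuclideanSpace ℝ (Fin N), 1 < ‖y‖ →
      gradient W y = (-(c * g ‖y‖ / ‖y‖)) • y := fun y hy => (hgrad y hy).gradient
  -- the explicit vector field
  set V₀ : EuclideanSpace ℝ (Fin N) → EuclideanSpace ℝ (Fin N) :=
    fun z => ((α - N)⁻¹ * (‖z‖ ^ (-α) - ‖z‖ ^ (-(N:ℝ)))) • z with hV₀_def
  have hVeq : ∀ y : EuclideanSpace ℝ (Fin N), 1 < ‖y‖ →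
      (‖gradient W y‖ ^ (p - 2)) • gradient W y = V₀ y := by
    intro y hy
    have hr0 : (0:ℝ) < ‖y‖ := by linarith
    have hgr : 0 < g ‖y‖ := aux_g_pos hp1 hα hy
    rw [hgrad_eq y hy, norm_smul, smul_smul]
    congr 1
    rw [Real.norm_eq_abs, abs_neg, abs_of_pos (div_pos (mul_pos hc hgr) hr0),
      div_mul_cancel₀ _ (ne_of_gt hr0)]
    have hX : 0 < c * g ‖y‖ := mul_pos hc hgr
    have h1 : (c * g ‖y‖) ^ (p - 2) * -(c * g ‖y‖ / ‖y‖)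
        = -((c * g ‖y‖) ^ (p - 1) / ‖y‖) := by
      rw [show p - 1 = (p - 2) + 1 by ring, Real.rpow_add_one (ne_of_gt hX)]
      ring
    rw [h1]
    have hA : (0:ℝ) ≤ ‖y‖ ^ (α - N) - 1 := by
      have : (1:ℝ) ≤ ‖y‖ ^ (α - N) := by
        calc (1:ℝ) = 1 ^ (α - (N:ℝ)) := (Real.one_rpow _).symm
        _ ≤ ‖y‖ ^ (α - (N:ℝ)) := Real.rpow_le_rpow zero_le_one hy.le (by linarith)
      linarith
    have hXp : (c * g ‖y‖) ^ (p - 1)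
        = (α - N)⁻¹ * ((‖y‖ ^ (α - N) - 1) * ‖y‖ ^ (-(α - 1))) := by
      rw [Real.mul_rpow hc.le hgr.le]
      congr 1
      · rw [hc_def, ← Real.rpow_mul hNα.le,
          show -1 / (p - 1) * (p - 1) = -1 by field_simp, Real.rpow_neg_one]
      · show ((‖y‖ ^ (α - N) - 1) ^ (1 / (p - 1)) * ‖y‖ ^ (-(α - 1) / (p - 1))) ^ (p - 1)
          = (‖y‖ ^ (α - N) - 1) * ‖y‖ ^ (-(α - 1))
        rw [Real.mul_rpow (Real.rpow_nonneg hA _) (Real.rpow_nonneg hr0.le _),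
          ← Real.rpow_mul hA, ← Real.rpow_mul hr0.le,
          show 1 / (p - 1) * (p - 1) = 1 by field_simp,
          show -(α - 1) / (p - 1) * (p - 1) = -(α - 1) by field_simp,
          Real.rpow_one]
    rw [hXp]
    have e1 : ‖y‖ ^ (α - N) * ‖y‖ ^ (-(α - 1)) = ‖y‖ ^ (-(N:ℝ)) * ‖y‖ := by
      rw [← Real.rpow_add hr0, show α - (N:ℝ) + -(α - 1) = -(N:ℝ) + 1 by ring,
        Real.rpow_add_one (ne_of_gt hr0)]
    have e2 : ‖y‖ ^ (-(α - 1)) = ‖y‖ ^ (-α) * ‖y‖ := by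
      rw [show -(α - 1) = -α + 1 by ring, Real.rpow_add_one (ne_of_gt hr0)]
    rw [sub_mul, e1, one_mul, e2]
    field_simp
    ring
  refine ⟨fun y hy => aux_g_int hp1 hpN hα hy, ?_, ?_, ?_, ?_⟩
  · exact fun y hy => mul_pos hc (aux_int_pos_Ioi hp1 hpN hα hy)
  · intro y1 y2 h1 h12
    have hsplit := aux_int_split (α := α) (n := (N:ℝ)) hp1 hpN hα h1 h12.le
    have hIoc := aux_int_pos_Ioc (α := α) (n := (N:ℝ)) hp1 hpN hα h1 h12
    have : (∫ t in Set.Ioi ‖y2‖, g t) < ∫ t in Set.Ioi ‖y1‖, g t := by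
      rw [show (∫ t in Set.Ioi ‖y1‖, g t)
        = (∫ t in Set.Ioc ‖y1‖ ‖y2‖, g t) + ∫ t in Set.Ioi ‖y2‖, g t from hsplit]
      linarith
    exact mul_lt_mul_of_pos_left this hc
  · -- C¹ smoothness of the vector field
    have hV₀smooth : ContDiffOn ℝ 1 V₀ {y : EuclideanSpace ℝ (Fin N) | 1 < ‖y‖} := by
      intro y hy
      have hy1 : (1:ℝ) < ‖y‖ := hy
      have hy0 : y ≠ 0 := by
        intro h; rw [h, norm_zero] at hy1; linarith
      have hr0 : ‖y‖ ≠ 0 := by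
        have : (0:ℝ) < ‖y‖ := by linarith
        exact ne_of_gt this
      refine ContDiffAt.contDiffWithinAt ?_
      have hnorm : ContDiffAt ℝ 1 (fun z : EuclideanSpace ℝ (Fin N) => ‖z‖) y :=
        contDiffAt_norm ℝ hy0
      exact (contDiffAt_const.mul ((hnorm.rpow_const_of_ne hr0).sub
        (hnorm.rpow_const_of_ne hr0))).smul contDiffAt_id
    exact hV₀smooth.congr fun y hy => hVeq y hy
  · -- the divergence identity
    intro y hy
    have hr0 : (0:ℝ) < ‖y‖ := by linarith
    have hy0 : y ≠ 0 := by
      intro h; rw [h, norm_zero] at hy; linarith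
    set k' : ℝ := (α - N)⁻¹ * (-α * ‖y‖ ^ (-α - 1) - -(N:ℝ) * ‖y‖ ^ (-(N:ℝ) - 1)) with hk'_def
    have hk : HasDerivAt (fun s : ℝ => (α - N)⁻¹ * (s ^ (-α) - s ^ (-(N:ℝ)))) k' ‖y‖ :=
      ((Real.hasDerivAt_rpow_const (Or.inl (ne_of_gt hr0))).sub
        (Real.hasDerivAt_rpow_const (Or.inl (ne_of_gt hr0)))).const_mul _
    have hf₀ := hk.comp_hasFDerivAt y (aux_hasFDerivAt_norm hy0)
    have hV₀d : HasFDerivAt V₀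
        (((α - N)⁻¹ * (‖y‖ ^ (-α) - ‖y‖ ^ (-(N:ℝ)))) •
            ContinuousLinearMap.id ℝ (EuclideanSpace ℝ (Fin N)) +
          (k' • (‖y‖⁻¹ • (innerSL ℝ y : EuclideanSpace ℝ (Fin N) →L[ℝ] ℝ))).smulRight y) y :=
      hf₀.smul (hasFDerivAt_id y)
    have hopen : IsOpen {z : EuclideanSpace ℝ (Fin N) | 1 < ‖z‖} :=
      isOpen_lt continuous_const continuous_norm
    have hfEq : (fun z => (‖gradient W z‖ ^ (p - 2)) • gradient W z) =ᶠ[nhds y] V₀ := by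
      filter_upwards [hopen.mem_nhds hy] with z hz using hVeq z hz
    have hfd := hfEq.fderiv_eq.trans hV₀d.fderiv
    rw [vecDiv]
    simp only [hfd, ContinuousLinearMap.add_apply, ContinuousLinearMap.smul_apply,
      ContinuousLinearMap.coe_id', id_eq, ContinuousLinearMap.smulRight_apply,
      innerSL_apply_apply, inner_add_left, real_inner_smul_left, smul_eq_mul,
      EuclideanSpace.inner_single_right, EuclideanSpace.inner_single_left,
      starRingEnd_apply, star_trivial, mul_one, one_mul]
    simp only [PiLp.smul_apply, EuclideanSpace.single_apply, if_pos rfl, if_true, smul_eq_mul, mul_one]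
    rw [Finset.sum_add_distrib, Finset.sum_const, Finset.card_univ, Fintype.card_fin,
      nsmul_eq_mul]
    have hsum : ∑ x : Fin N, k' * (‖y‖⁻¹ * y x) * y x = k' * ‖y‖⁻¹ * (‖y‖ * ‖y‖) := by
      rw [Finset.sum_congr rfl fun x _ =>
        show k' * (‖y‖⁻¹ * y x) * y x = k' * ‖y‖⁻¹ * (y x * y x) from by ring,
        ← Finset.mul_sum]
      congr 1
      rw [← real_inner_self_eq_norm_mul_norm, PiLp.inner_apply]
      simp [RCLike.inner_apply]
      simp only [sq]
    rw [hsum]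
    have eA : ‖y‖ ^ (-α - 1) * ‖y‖ = ‖y‖ ^ (-α) := by
      rw [← Real.rpow_add_one (ne_of_gt hr0) (-α - 1), show -α - 1 + 1 = -α from by ring]
    have eB : ‖y‖ ^ (-(N:ℝ) - 1) * ‖y‖ = ‖y‖ ^ (-(N:ℝ)) := by
      rw [← Real.rpow_add_one (ne_of_gt hr0) (-(N:ℝ) - 1),
        show -(N:ℝ) - 1 + 1 = -(N:ℝ) from by ring]
    have hk'r : k' * ‖y‖⁻¹ * (‖y‖ * ‖y‖) = k' * ‖y‖ := by
      field_simp
    have key : k' * ‖y‖ = (α - N)⁻¹ * (-α * ‖y‖ ^ (-α) + (N:ℝ) * ‖y‖ ^ (-(N:ℝ))) := by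
      calc k' * ‖y‖
          = (α - (N:ℝ))⁻¹ * (-α * (‖y‖ ^ (-α - 1) * ‖y‖) + (N:ℝ) * (‖y‖ ^ (-(N:ℝ) - 1) * ‖y‖)) := by
            rw [hk'_def]; ring
        _ = (α - N)⁻¹ * (-α * ‖y‖ ^ (-α) + (N:ℝ) * ‖y‖ ^ (-(N:ℝ))) := by rw [eA, eB]
    rw [hk'r, key]
    field_simp
    ring

end
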